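/- Let p be a prime, n ≥ 1, u < v real numbers, f : [u,v] → [u,v] a function, and h : [0,1] → [u,v] a continuous bijection such that f(h(x)) = h(g_p(x)) for all x ∈ [0,1]. Then there exists a bijection B_f from the set {y ∈ [u,v] : f^n(y) = y} (f^n the n-fold iterate) onto the finite field F_{p^n} such that (B_f(y))^p = B_f(f(y)) for every y with f^n(y) = y. -/

import Mathlib

open Real Set Function Polynomial

/-- The continuous piecewise linear map `g_p : [0,1] → [0,1]` that goes up and down
`p` times: on `[k/p, (k+1)/p]` it is `x ↦ p·x − k` for `k` even and
`x ↦ k + 1 − p·x` for `k` odd. -/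
noncomputable def gp (p : ℕ) (x : ℝ) : ℝ :=
  if Even ⌊(p : ℝ) * x⌋ then (p : ℝ) * x - ⌊(p : ℝ) * x⌋
  else (⌊(p : ℝ) * x⌋ : ℝ) + 1 - (p : ℝ) * x

lemma gp_mem_Icc (q : ℕ) (x : ℝ) : gp q x ∈ Set.Icc (0:ℝ) 1 := by
  unfold gp
  split_ifs with hk
  · exact ⟨by linarith [Int.floor_le ((q:ℝ)*x)], by linarith [Int.lt_floor_add_one ((q:ℝ)*x)]⟩
  · exact ⟨by linarith [Int.lt_floor_add_one ((q:ℝ)*x)], by linarith [Int.floor_le ((q:ℝ)*x)]⟩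

lemma cos_pi_gp (q : ℕ) (x : ℝ) : Real.cos (π * gp q x) = Real.cos (π * ((q:ℝ) * x)) := by
  unfold gp
  rcases Int.even_or_odd ⌊(q:ℝ)*x⌋ with he | ho
  · rw [if_pos he]
    obtain ⟨j, hj⟩ := he
    have h : π * ((q:ℝ)*x - (⌊(q:ℝ)*x⌋ : ℝ)) = π * ((q:ℝ)*x) - (j : ℝ) * (2*π) := by
      rw [hj]; push_cast; ring
    rw [h, Real.cos_sub_int_mul_two_pi]
  · rw [if_neg (Int.not_even_iff_odd.mpr ho)]
    obtain ⟨j, hj⟩ := ho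
    have h : π * ((⌊(q:ℝ)*x⌋ : ℝ) + 1 - (q:ℝ)*x) = -(π * ((q:ℝ)*x)) + ((j+1 : ℤ) : ℝ) * (2*π) := by
      rw [hj]; push_cast; ring
    rw [h, Real.cos_add_int_mul_two_pi, Real.cos_neg]

lemma cos_nat_mul_cong (c : ℕ) {a b : ℝ} (h : Real.cos a = Real.cos b) :
    Real.cos ((c:ℝ) * a) = Real.cos ((c:ℝ) * b) := by
  have h1 := Polynomial.Chebyshev.T_real_cos a (c : ℤ)
  have h2 := Polynomial.Chebyshev.T_real_cos b (c : ℤ)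
  push_cast at h1 h2
  rw [← h1, ← h2, h]

lemma cos_gp_iterate (p : ℕ) (m : ℕ) (x : ℝ) :
    Real.cos (π * ((gp p)^[m] x)) = Real.cos (π * ((p:ℝ)^m * x)) := by
  induction m generalizing x with
  | zero => simp
  | succ m ih =>
    rw [Function.iterate_succ_apply]
    rw [ih (gp p x)]
    have h1 : π * ((p:ℝ)^m * gp p x) = ((p^m : ℕ):ℝ) * (π * gp p x) := by push_cast; ring
    have h2 : π * ((p:ℝ)^(m+1) * x) = ((p^m : ℕ):ℝ) * (π * ((p:ℝ) * x)) := by push_cast; ring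
    rw [h1, h2]
    exact cos_nat_mul_cong (p^m) (cos_pi_gp p x)



noncomputable def phi (q k : ℕ) : ℝ :=
  if Even k then (k:ℝ)/((q:ℝ)-1) else ((k:ℝ)+1)/((q:ℝ)+1)

lemma cos_set_eq (q : ℕ) (hq : 2 ≤ q) :
    {x : ℝ | x ∈ Set.Icc (0:ℝ) 1 ∧ Real.cos (π * ((q:ℝ) * x)) = Real.cos (π * x)}
      = ↑((Finset.range q).image (phi q)) := by
  have hq1 : (1:ℝ) < (q:ℝ) := by exact_mod_cast hq.trans_lt' one_lt_two
  have hd1 : (0:ℝ) < (q:ℝ) - 1 := by linarith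
  have hd2 : (0:ℝ) < (q:ℝ) + 1 := by linarith
  ext x
  simp only [Set.mem_setOf_eq, Finset.coe_image, Set.mem_image, Finset.coe_range, Set.mem_Iio]
  constructor
  · rintro ⟨⟨hx0, hx1⟩, hcos⟩
    rw [Real.cos_eq_cos_iff] at hcos
    obtain ⟨K, hK | hK⟩ := hcos
    · -- π * x = 2 * K * π + π * (q * x)
      have h2 : π * (x - (q:ℝ)*x) = π * (2*(K:ℝ)) := by
        rw [mul_sub]; linarith [hK]
      have h3 : x - (q:ℝ)*x = 2*(K:ℝ) := mul_left_cancel₀ Real.pi_ne_zero h2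
      have h4 : ((q:ℝ) - 1) * x = 2 * ((-K : ℤ):ℝ) := by push_cast; linarith
      have hj0 : (0:ℤ) ≤ -K := by
        have : (0:ℝ) ≤ 2*((-K:ℤ):ℝ) := by rw [← h4]; positivity
        have : (0:ℝ) ≤ ((-K:ℤ):ℝ) := by linarith
        exact_mod_cast this
      have hj1 : 2*((-K:ℤ):ℝ) ≤ (q:ℝ) - 1 := by
        rw [← h4]
        nlinarith
      have hj1' : 2 * (-K) ≤ (q:ℤ) - 1 := by exact_mod_cast hj1
      refine ⟨2 * (-K).toNat, ?_, ?_⟩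
      · omega
      · unfold phi
        rw [if_pos ⟨(-K).toNat, by ring⟩]
        rw [div_eq_iff (by linarith : (q:ℝ)-1 ≠ 0)]
        have h5 : ((2 * (-K).toNat : ℕ) : ℤ) = 2 * (-K) := by omega
        have : ((2 * (-K).toNat : ℕ) : ℝ) = 2*((-K:ℤ):ℝ) := by exact_mod_cast congrArg (Int.cast : ℤ → ℝ) h5
        rw [this, ← h4]; ring
    · -- π * x = 2 * K * π - π * (q * x)
      have h2 : π * (x + (q:ℝ)*x) = π * (2*(K:ℝ)) := by
        rw [mul_add]; linarith [hK]
      have h3 : ((q:ℝ) + 1) * x = 2*((K:ℤ):ℝ) := by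
        have := mul_left_cancel₀ Real.pi_ne_zero h2
        push_cast; linarith
      have hj0 : (0:ℤ) ≤ K := by
        have : (0:ℝ) ≤ 2*((K:ℤ):ℝ) := by rw [← h3]; positivity
        have : (0:ℝ) ≤ ((K:ℤ):ℝ) := by linarith
        exact_mod_cast this
      have hj1 : 2*((K:ℤ):ℝ) ≤ (q:ℝ) + 1 := by rw [← h3]; nlinarith
      have hj1' : 2 * K ≤ (q:ℤ) + 1 := by exact_mod_cast hj1
      by_cases hK0 : K = 0
      · refine ⟨0, by omega, ?_⟩
        have hx00 : x = 0 := by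
          subst hK0
          norm_num at h3
          exact h3.resolve_left (ne_of_gt hd2)
        unfold phi
        rw [if_pos Even.zero, hx00]
        simp
      · by_cases hKq : 2 * K = (q:ℤ) + 1
        · -- x = 1, q odd
          have hx11 : x = 1 := by
            have h6 : ((q:ℝ)+1) * x = ((q:ℝ)+1) * 1 := by
              rw [h3, mul_one]; exact_mod_cast congrArg (Int.cast : ℤ → ℝ) hKq
            exact mul_left_cancel₀ (ne_of_gt hd2) h6
          refine ⟨q - 1, by omega, ?_⟩
          have hqodd : Even (q - 1) := by rw [Nat.even_iff]; omega
          unfold phi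
          rw [if_pos hqodd, hx11]
          rw [div_eq_iff (by linarith : (q:ℝ)-1 ≠ 0)]
          push_cast [Nat.cast_sub (by omega : 1 ≤ q)]
          ring
        · -- 1 ≤ K, 2K ≤ q
          refine ⟨2 * K.toNat - 1, by omega, ?_⟩
          have hodd : ¬ Even (2 * K.toNat - 1) := by
            rw [Nat.even_iff]; omega
          unfold phi
          rw [if_neg hodd]
          rw [div_eq_iff (by linarith : (q:ℝ)+1 ≠ 0)]
          have h5 : ((2 * K.toNat - 1 : ℕ) : ℤ) + 1 = 2 * K := by omega
          have : ((2 * K.toNat - 1 : ℕ) : ℝ) + 1 = 2*((K:ℤ):ℝ) := by exact_mod_cast congrArg (Int.cast : ℤ → ℝ) h5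
          rw [this, ← h3]; ring
  · rintro ⟨k, hk, rfl⟩
    unfold phi
    by_cases hek : Even k
    · rw [if_pos hek]
      have hkle : (k:ℝ) ≤ (q:ℝ) - 1 := by
        have h7 : ((k:ℤ):ℝ) ≤ (((q:ℤ) - 1 : ℤ):ℝ) := by
          exact_mod_cast (by omega : (k:ℤ) ≤ (q:ℤ) - 1)
        push_cast at h7
        exact h7
      refine ⟨⟨by positivity, by rw [div_le_one hd1]; exact hkle⟩, ?_⟩
      rw [Real.cos_eq_cos_iff]
      obtain ⟨j, hj⟩ := hek
      refine ⟨-(j:ℤ), Or.inl ?_⟩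
      have hkr : (k:ℝ) = 2*(j:ℝ) := by push_cast [hj]; ring
      field_simp
      ring_nf
      rw [hkr]
      push_cast; ring
    · rw [if_neg hek]
      have hkle : (k:ℝ) + 1 ≤ (q:ℝ) + 1 := by
        have : (k:ℝ) ≤ (q:ℝ) := by exact_mod_cast hk.le
        linarith
      refine ⟨⟨by positivity, by rw [div_le_one hd2]; exact hkle⟩, ?_⟩
      rw [Real.cos_eq_cos_iff]
      obtain ⟨j, hj⟩ := Nat.odd_iff.mpr (Nat.not_even_iff.mp (by simpa using hek))
      refine ⟨(j:ℤ)+1, Or.inr ?_⟩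
      have hkr : (k:ℝ) = 2*(j:ℝ)+1 := by push_cast [hj]; ring
      field_simp
      ring_nf
      rw [hkr]
      push_cast; ring



section
variable (q : ℕ)

lemma phi_injOn (hq : 2 ≤ q) : Set.InjOn (phi q) ↑(Finset.range q) := by
  have hq1 : (1:ℝ) < (q:ℝ) := by exact_mod_cast hq.trans_lt' one_lt_two
  have hd1 : (q:ℝ) - 1 ≠ 0 := by linarith
  have hd2 : (q:ℝ) + 1 ≠ 0 := by linarith
  have mixed : ∀ a b : ℕ, Even a → ¬ Even b → a < q → b < q →
      (a:ℝ)/((q:ℝ)-1) = ((b:ℝ)+1)/((q:ℝ)+1) → False := by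
    intro a b hea hob ha hb heq
    rw [div_eq_div_iff (by linarith) (by linarith)] at heq
    have hz : (a:ℤ)*((q:ℤ)+1) = ((b:ℤ)+1)*((q:ℤ)-1) := by exact_mod_cast heq
    have key : (q:ℤ)*((b:ℤ)+1-(a:ℤ)) = (a:ℤ)+(b:ℤ)+1 := by ring_nf; ring_nf at hz; linarith
    have hq0 : (0:ℤ) < (q:ℤ) := by exact_mod_cast (by omega : 0 < q)
    have haq : (a:ℤ) < (q:ℤ) := by exact_mod_cast ha
    have hbq : (b:ℤ) < (q:ℤ) := by exact_mod_cast hb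
    set t : ℤ := (b:ℤ)+1-(a:ℤ) with ht
    have ht1 : 0 < t := by
      by_contra hcon
      push_neg at hcon
      have : (q:ℤ)*t ≤ 0 := mul_nonpos_of_nonneg_of_nonpos hq0.le hcon
      have : (0:ℤ) < (a:ℤ)+(b:ℤ)+1 := by positivity
      omega
    have ht2 : t < 2 := by
      by_contra hcon
      push_neg at hcon
      have : (q:ℤ)*2 ≤ (q:ℤ)*t := by
        exact mul_le_mul_of_nonneg_left hcon hq0.le
      omega
    have htt : t = 1 := by omega
    have hab : a = b := by omega
    rw [Nat.even_iff] at hea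
    rw [Nat.even_iff] at hob
    omega
  intro a ha b hb hab
  simp only [Finset.coe_range, Set.mem_Iio] at ha hb
  unfold phi at hab
  by_cases hea : Even a <;> by_cases heb : Even b
  · rw [if_pos hea, if_pos heb, div_eq_div_iff (by linarith) (by linarith)] at hab
    have : (a:ℝ) = b := by
      have := mul_right_cancel₀ (by linarith : (q:ℝ)-1 ≠ 0) hab
      exact this
    exact_mod_cast this
  · rw [if_pos hea, if_neg heb] at hab
    exact absurd hab (fun hh => mixed a b hea heb ha hb hh)
  · rw [if_neg hea, if_pos heb] at hab
    exact absurd hab.symm (fun hh => mixed b a heb hea hb ha hh)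
  · rw [if_neg hea, if_neg heb, div_eq_div_iff (by linarith) (by linarith)] at hab
    have : (a:ℝ) = b := by
      have := mul_right_cancel₀ (by linarith : (q:ℝ)+1 ≠ 0) hab
      linarith
    exact_mod_cast this

lemma phi_card (hq : 2 ≤ q) : ((Finset.range q).image (phi q)).card = q := by
  rw [Finset.card_image_of_injOn (phi_injOn q hq), Finset.card_range]

end




lemma gp_iterate_mem_Icc (p m : ℕ) (hm : 1 ≤ m) (x : ℝ) : (gp p)^[m] x ∈ Set.Icc (0:ℝ) 1 := by
  obtain ⟨m', rfl⟩ : ∃ m', m = m' + 1 := ⟨m - 1, by omega⟩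
  rw [Function.iterate_succ_apply']
  exact gp_mem_Icc p _

lemma tentFix_eq_cos_set (p m : ℕ) (hm : 1 ≤ m) :
    {x : ℝ | x ∈ Set.Icc (0:ℝ) 1 ∧ (gp p)^[m] x = x}
      = {x : ℝ | x ∈ Set.Icc (0:ℝ) 1 ∧ Real.cos (π * (((p^m : ℕ):ℝ) * x)) = Real.cos (π * x)} := by
  have hcast : ∀ x : ℝ, π * (((p^m : ℕ):ℝ) * x) = π * ((p:ℝ)^m * x) := by
    intro x; push_cast; ring
  ext x
  simp only [Set.mem_setOf_eq]
  constructor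
  · rintro ⟨hx, hfix⟩
    refine ⟨hx, ?_⟩
    rw [hcast, ← cos_gp_iterate, hfix]
  · rintro ⟨hx, hcos⟩
    refine ⟨hx, ?_⟩
    rw [hcast, ← cos_gp_iterate] at hcos
    have hmem : ∀ y : ℝ, y ∈ Set.Icc (0:ℝ) 1 → π * y ∈ Set.Icc 0 π := by
      intro y hy
      constructor
      · exact mul_nonneg Real.pi_pos.le hy.1
      · nlinarith [Real.pi_pos, hy.2]
    have := Real.injOn_cos (hmem _ (gp_iterate_mem_Icc p m hm x)) (hmem _ hx) hcos
    exact mul_left_cancel₀ Real.pi_ne_zero this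



private lemma restrict_iterate_val {α : Type*} {p : α → Prop} {σ : α → α}
    (hcl : ∀ a, p a → p (σ a)) (d : ℕ) (x : {a // p a}) :
    ((fun y : {a // p a} => (⟨σ y.1, hcl y.1 y.2⟩ : {a // p a}))^[d] x).1 = σ^[d] x.1 := by
  induction d generalizing x with
  | zero => rfl
  | succ d ih =>
    rw [Function.iterate_succ_apply, Function.iterate_succ_apply]
    exact ih _

private lemma fix_card_eq_sum {α : Type*} [Fintype α] [DecidableEq α] (σ : α → α) (d : ℕ)
    (hd : 0 < d) :
    (Finset.univ.filter (fun x => σ^[d] x = x)).card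
      = ∑ e ∈ d.divisors,
          (Finset.univ.filter (fun x => Function.minimalPeriod σ x = e)).card := by
  classical
  rw [Finset.card_eq_sum_card_fiberwise
    (f := fun x => Function.minimalPeriod σ x) (t := d.divisors) ?cond]
  case cond =>
    intro x hx
    simp only [Finset.coe_filter, Finset.mem_univ, true_and, Set.mem_setOf_eq] at hx
    exact Nat.mem_divisors.mpr ⟨(show Function.IsPeriodicPt σ d x from hx).minimalPeriod_dvd, hd.ne'⟩
  apply Finset.sum_congr rfl
  intro e he
  congr 1
  ext x
  simp only [Finset.mem_filter, Finset.mem_univ, true_and]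
  constructor
  · rintro ⟨-, h2⟩; exact h2
  · intro h2
    refine ⟨?_, h2⟩
    obtain ⟨hdvd, -⟩ := Nat.mem_divisors.mp he
    have hper : Function.IsPeriodicPt σ e x := by
      rw [← h2]; exact Function.iterate_minimalPeriod
    obtain ⟨c, rfl⟩ := hdvd
    exact hper.mul_const c

private lemma pcount_eq {α β : Type*} [Fintype α] [Fintype β] [DecidableEq α] [DecidableEq β]
    (σ : α → α) (τ : β → β) (N : ℕ)
    (hcount : ∀ d, 0 < d → d ∣ N →
      (Finset.univ.filter (fun x => σ^[d] x = x)).card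
        = (Finset.univ.filter (fun y => τ^[d] y = y)).card) :
    ∀ d, 0 < d → d ∣ N →
      (Finset.univ.filter (fun x : α => Function.minimalPeriod σ x = d)).card
        = (Finset.univ.filter (fun y : β => Function.minimalPeriod τ y = d)).card := by
  intro d
  induction d using Nat.strong_induction_on with
  | _ d ih =>
    intro hd hdN
    have h1 := fix_card_eq_sum σ d hd
    have h2 := fix_card_eq_sum τ d hd
    rw [hcount d hd hdN] at h1
    have hsplit : d.divisors = insert d (d.divisors.erase d) :=
      (Finset.insert_erase (Nat.mem_divisors_self d hd.ne')).symm
    rw [hsplit, Finset.sum_insert (Finset.notMem_erase _ _)] at h1 h2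
    have hsum : ∑ e ∈ d.divisors.erase d,
          (Finset.univ.filter (fun x : α => Function.minimalPeriod σ x = e)).card
        = ∑ e ∈ d.divisors.erase d,
          (Finset.univ.filter (fun y : β => Function.minimalPeriod τ y = e)).card := by
      apply Finset.sum_congr rfl
      intro e he
      obtain ⟨hne, he'⟩ := Finset.mem_erase.mp he
      obtain ⟨hdvd, -⟩ := Nat.mem_divisors.mp he'
      exact ih e (lt_of_le_of_ne (Nat.le_of_dvd hd hdvd) hne)
        (Nat.pos_of_dvd_of_pos hdvd hd) (hdvd.trans hdN)
    omega

private lemma orbit_shift {α : Type*} {σ : α → α} (hinj : Function.Injective σ)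
    {x₀ : α} {m : ℕ} (hm : 0 < m) (hcycle : σ^[m] x₀ = x₀) (x : α) :
    (∃ i, i < m ∧ σ^[i] x₀ = x) ↔ (∃ i, i < m ∧ σ^[i] x₀ = σ x) := by
  constructor
  · rintro ⟨i, him, rfl⟩
    by_cases hi : i + 1 < m
    · exact ⟨i+1, hi, (Function.iterate_succ_apply' σ i x₀)⟩
    · have him1 : i + 1 = m := by omega
      refine ⟨0, hm, ?_⟩
      simp only [Function.iterate_zero_apply]
      have hstep : σ (σ^[i] x₀) = σ^[i+1] x₀ := (Function.iterate_succ_apply' σ i x₀).symm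
      rw [hstep, him1, hcycle]
  · rintro ⟨i, him, hi⟩
    rcases Nat.eq_zero_or_pos i with rfl | hipos
    · refine ⟨m - 1, by omega, ?_⟩
      apply hinj
      rw [← Function.iterate_succ_apply' σ (m-1) x₀]
      simp only [Nat.succ_eq_add_one]
      have hm1 : m - 1 + 1 = m := by omega
      rw [hm1, hcycle]
      simpa using hi
    · refine ⟨i - 1, by omega, ?_⟩
      apply hinj
      rw [← Function.iterate_succ_apply' σ (i-1) x₀]
      simp only [Nat.succ_eq_add_one]
      have hi1 : i - 1 + 1 = i := by omega
      rw [hi1, hi]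

private theorem conj_of_fix_count : ∀ (k : ℕ) {α β : Type} [Fintype α] [Fintype β]
    (σ : α → α) (τ : β → β) (N : ℕ), 0 < N → σ^[N] = id → τ^[N] = id →
    (∀ d, 0 < d → d ∣ N →
      Nat.card {x : α // σ^[d] x = x} = Nat.card {y : β // τ^[d] y = y}) →
    Fintype.card α = k →
    ∃ e : α ≃ β, ∀ x, e (σ x) = τ (e x) := by
  intro k
  induction k using Nat.strong_induction_on with
  | _ k IH =>
  intro α β instα instβ σ τ N hN hσ hτ hcount hk
  classical
  have hcount' : ∀ d, 0 < d → d ∣ N →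
      (Finset.univ.filter (fun x : α => σ^[d] x = x)).card
        = (Finset.univ.filter (fun y : β => τ^[d] y = y)).card := by
    intro d hd hdN
    have hc := hcount d hd hdN
    rwa [Nat.card_eq_fintype_card, Nat.card_eq_fintype_card,
      Fintype.card_subtype, Fintype.card_subtype] at hc
  by_cases hα : Nonempty α
  case neg =>
    have hemp : IsEmpty α := not_nonempty_iff.mp hα
    have h1 := hcount N hN dvd_rfl
    have e1 : {x : α // σ^[N] x = x} ≃ α := Equiv.subtypeUnivEquiv (fun x => by rw [hσ]; rfl)
    have e2 : {y : β // τ^[N] y = y} ≃ β := Equiv.subtypeUnivEquiv (fun y => by rw [hτ]; rfl)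
    rw [Nat.card_congr e1, Nat.card_congr e2] at h1
    have h0 : Nat.card β = 0 := by rw [← h1]; simp [Nat.card_eq_fintype_card]
    rw [Nat.card_eq_fintype_card] at h0
    have hempβ : IsEmpty β := Fintype.card_eq_zero_iff.mp h0
    exact ⟨Equiv.equivOfIsEmpty α β, fun x => isEmptyElim x⟩
  case pos =>
  obtain ⟨x₀⟩ := hα
  have hinjσ : Function.Injective σ := by
    intro a b hab
    have h1 := congrArg (σ^[N-1]) hab
    rw [← Function.iterate_succ_apply, ← Function.iterate_succ_apply] at h1
    simp only [Nat.succ_eq_add_one] at h1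
    have h2 : N - 1 + 1 = N := by omega
    rw [h2, hσ] at h1
    exact h1
  have hperx₀ : Function.IsPeriodicPt σ N x₀ := by
    show σ^[N] x₀ = x₀; rw [hσ]; rfl
  set m := Function.minimalPeriod σ x₀ with hmdef
  have hm0 : 0 < m := hperx₀.minimalPeriod_pos hN
  have hmN : m ∣ N := hperx₀.minimalPeriod_dvd
  have hcycσ : σ^[m] x₀ = x₀ := Function.iterate_minimalPeriod
  have hpc := pcount_eq σ τ N hcount' m hm0 hmN
  have hx₀mem : x₀ ∈ Finset.univ.filter (fun x : α => Function.minimalPeriod σ x = m) := by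
    simp [hmdef]
  have hbpos : 0 < (Finset.univ.filter (fun y : β => Function.minimalPeriod τ y = m)).card := by
    rw [← hpc]
    exact Finset.card_pos.mpr ⟨x₀, hx₀mem⟩
  obtain ⟨y₀, hy₀mem⟩ := Finset.card_pos.mp hbpos
  have hy₀ : Function.minimalPeriod τ y₀ = m := by simpa using hy₀mem
  have hcycτ : τ^[m] y₀ = y₀ := by rw [← hy₀]; exact Function.iterate_minimalPeriod
  have huniqσ : ∀ i j, i < m → j < m → σ^[i] x₀ = σ^[j] x₀ → i = j := by
    intro i j hi hj hij
    exact Function.iterate_injOn_Iio_minimalPeriod (Set.mem_Iio.mpr hi) (Set.mem_Iio.mpr hj) hij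
  have huniqτ : ∀ i j, i < m → j < m → τ^[i] y₀ = τ^[j] y₀ → i = j := by
    intro i j hi hj hij
    refine Function.iterate_injOn_Iio_minimalPeriod ?_ ?_ hij <;>
      rw [Set.mem_Iio, hy₀] <;> assumption
  have hminorbσ : ∀ i : ℕ, Function.minimalPeriod σ (σ^[i] x₀) = m := by
    intro i
    exact Function.minimalPeriod_apply_iterate (Function.mk_mem_periodicPts hN hperx₀) i
  have hpery₀ : Function.IsPeriodicPt τ m y₀ := hcycτ
  have hminorbτ : ∀ i : ℕ, Function.minimalPeriod τ (τ^[i] y₀) = m := by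
    intro i
    rw [Function.minimalPeriod_apply_iterate (Function.mk_mem_periodicPts hm0 hpery₀) i, hy₀]
  set P : α → Prop := fun x => ∃ i, i < m ∧ σ^[i] x₀ = x with hPdef
  set Q : β → Prop := fun y => ∃ i, i < m ∧ τ^[i] y₀ = y with hQdef
  have hinjτ : Function.Injective τ := by
    intro a b hab
    have h1 := congrArg (τ^[N-1]) hab
    rw [← Function.iterate_succ_apply, ← Function.iterate_succ_apply] at h1
    simp only [Nat.succ_eq_add_one] at h1
    have h2 : N - 1 + 1 = N := by omega
    rw [h2, hτ] at h1
    exact h1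
  have hPiff : ∀ x, P x ↔ P (σ x) := fun x => orbit_shift hinjσ hm0 hcycσ x
  have hQiff : ∀ y, Q y ↔ Q (τ y) := fun y => orbit_shift hinjτ hm0 hcycτ y
  have hOcardσ : (Finset.univ.filter (fun x : α => P x)).card = m := by
    have hOα : (Finset.univ.filter (fun x : α => P x))
        = (Finset.range m).image (fun i => σ^[i] x₀) := by
      ext x
      simp [hPdef, Finset.mem_image, Finset.mem_range]
    rw [hOα, Finset.card_image_of_injOn, Finset.card_range]
    intro i hi j hj hij
    simp only [Finset.coe_range, Set.mem_Iio] at hi hj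
    exact huniqσ i j hi hj hij
  have hOcardτ : (Finset.univ.filter (fun y : β => Q y)).card = m := by
    have hOβ : (Finset.univ.filter (fun y : β => Q y))
        = (Finset.range m).image (fun i => τ^[i] y₀) := by
      ext y
      simp [hQdef, Finset.mem_image, Finset.mem_range]
    rw [hOβ, Finset.card_image_of_injOn, Finset.card_range]
    intro i hi j hj hij
    simp only [Finset.coe_range, Set.mem_Iio] at hi hj
    exact huniqτ i j hi hj hij
  have hfixPσ : ∀ (d : ℕ), 0 < d →
      (Finset.univ.filter (fun x : α => σ^[d] x = x ∧ P x)).card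
        = if m ∣ d then m else 0 := by
    intro d hd
    by_cases hmd : m ∣ d
    · rw [if_pos hmd]
      have hfe : (Finset.univ.filter (fun x : α => σ^[d] x = x ∧ P x))
          = Finset.univ.filter (fun x : α => P x) := by
        ext x
        simp only [Finset.mem_filter, Finset.mem_univ, true_and]
        constructor
        · rintro ⟨-, hP⟩; exact hP
        · intro hP
          refine ⟨?_, hP⟩
          obtain ⟨i, him, rfl⟩ := hP
          have hpp : Function.IsPeriodicPt σ m (σ^[i] x₀) := by
            rw [← hminorbσ i]; exact Function.iterate_minimalPeriod
          obtain ⟨c, rfl⟩ := hmd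
          exact hpp.mul_const c
      rw [hfe, hOcardσ]
    · rw [if_neg hmd, Finset.card_eq_zero, Finset.filter_eq_empty_iff]
      rintro x -
      rintro ⟨hfix, i, him, rfl⟩
      exact hmd (by
        rw [← hminorbσ i]
        exact (show Function.IsPeriodicPt σ d _ from hfix).minimalPeriod_dvd)
  have hfixQτ : ∀ (d : ℕ), 0 < d →
      (Finset.univ.filter (fun y : β => τ^[d] y = y ∧ Q y)).card
        = if m ∣ d then m else 0 := by
    intro d hd
    by_cases hmd : m ∣ d
    · rw [if_pos hmd]
      have hfe : (Finset.univ.filter (fun y : β => τ^[d] y = y ∧ Q y))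
          = Finset.univ.filter (fun y : β => Q y) := by
        ext y
        simp only [Finset.mem_filter, Finset.mem_univ, true_and]
        constructor
        · rintro ⟨-, hQ⟩; exact hQ
        · intro hQ
          refine ⟨?_, hQ⟩
          obtain ⟨i, him, rfl⟩ := hQ
          have hpp : Function.IsPeriodicPt τ m (τ^[i] y₀) := by
            rw [← hminorbτ i]; exact Function.iterate_minimalPeriod
          obtain ⟨c, rfl⟩ := hmd
          exact hpp.mul_const c
      rw [hfe, hOcardτ]
    · rw [if_neg hmd, Finset.card_eq_zero, Finset.filter_eq_empty_iff]
      rintro y -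
      rintro ⟨hfix, i, him, rfl⟩
      exact hmd (by
        rw [← hminorbτ i]
        exact (show Function.IsPeriodicPt τ d _ from hfix).minimalPeriod_dvd)
  have hclσ : ∀ a, ¬ P a → ¬ P (σ a) := fun a ha h => ha ((hPiff a).mpr h)
  have hclτ : ∀ b, ¬ Q b → ¬ Q (τ b) := fun b hb h => hb ((hQiff b).mpr h)
  set σ' : {a : α // ¬ P a} → {a : α // ¬ P a} :=
    fun y => ⟨σ y.1, hclσ y.1 y.2⟩ with hσ'def
  set τ' : {b : β // ¬ Q b} → {b : β // ¬ Q b} :=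
    fun y => ⟨τ y.1, hclτ y.1 y.2⟩ with hτ'def
  have hitσ' : ∀ (d : ℕ) (x : {a : α // ¬ P a}), (σ'^[d] x).1 = σ^[d] x.1 :=
    fun d x => restrict_iterate_val hclσ d x
  have hitτ' : ∀ (d : ℕ) (y : {b : β // ¬ Q b}), (τ'^[d] y).1 = τ^[d] y.1 :=
    fun d y => restrict_iterate_val hclτ d y
  have hσ'N : σ'^[N] = id := by
    funext y
    apply Subtype.ext
    rw [hitσ' N y, hσ]
    rfl
  have hτ'N : τ'^[N] = id := by
    funext y
    apply Subtype.ext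
    rw [hitτ' N y, hτ]
    rfl
  have hcardσ' : ∀ d, 0 < d →
      Nat.card {x : {a : α // ¬ P a} // σ'^[d] x = x}
        = (Finset.univ.filter (fun x : α => σ^[d] x = x)).card - (if m ∣ d then m else 0) := by
    intro d hd
    have e1 : {x : {a : α // ¬ P a} // σ'^[d] x = x}
        ≃ {x : {a : α // ¬ P a} // σ^[d] x.1 = x.1} :=
      Equiv.subtypeEquivRight (fun x => by rw [Subtype.ext_iff, hitσ' d x])
    have e2 : {x : {a : α // ¬ P a} // σ^[d] x.1 = x.1} ≃ {a : α // ¬ P a ∧ σ^[d] a = a} :=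
      Equiv.subtypeSubtypeEquivSubtypeInter (fun a : α => ¬ P a) (fun a : α => σ^[d] a = a)
    have e3 : {a : α // ¬ P a ∧ σ^[d] a = a} ≃ {a : α // σ^[d] a = a ∧ ¬ P a} :=
      Equiv.subtypeEquivRight (fun a => and_comm)
    rw [Nat.card_congr ((e1.trans e2).trans e3), Nat.card_eq_fintype_card,
      Fintype.card_subtype]
    have hsum := Finset.card_filter_add_card_filter_not
      (s := Finset.univ.filter (fun x : α => σ^[d] x = x)) (p := P)
    rw [Finset.filter_filter, Finset.filter_filter] at hsum
    have h1 := hfixPσ d hd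
    omega
  have hcardτ' : ∀ d, 0 < d →
      Nat.card {y : {b : β // ¬ Q b} // τ'^[d] y = y}
        = (Finset.univ.filter (fun y : β => τ^[d] y = y)).card - (if m ∣ d then m else 0) := by
    intro d hd
    have e1 : {x : {b : β // ¬ Q b} // τ'^[d] x = x}
        ≃ {x : {b : β // ¬ Q b} // τ^[d] x.1 = x.1} :=
      Equiv.subtypeEquivRight (fun x => by rw [Subtype.ext_iff, hitτ' d x])
    have e2 : {x : {b : β // ¬ Q b} // τ^[d] x.1 = x.1} ≃ {b : β // ¬ Q b ∧ τ^[d] b = b} :=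
      Equiv.subtypeSubtypeEquivSubtypeInter (fun b : β => ¬ Q b) (fun b : β => τ^[d] b = b)
    have e3 : {b : β // ¬ Q b ∧ τ^[d] b = b} ≃ {b : β // τ^[d] b = b ∧ ¬ Q b} :=
      Equiv.subtypeEquivRight (fun b => and_comm)
    rw [Nat.card_congr ((e1.trans e2).trans e3), Nat.card_eq_fintype_card,
      Fintype.card_subtype]
    have hsum := Finset.card_filter_add_card_filter_not
      (s := Finset.univ.filter (fun y : β => τ^[d] y = y)) (p := Q)
    rw [Finset.filter_filter, Finset.filter_filter] at hsum
    have h1 := hfixQτ d hd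
    omega
  have hcount'' : ∀ d, 0 < d → d ∣ N →
      Nat.card {x : {a : α // ¬ P a} // σ'^[d] x = x}
        = Nat.card {y : {b : β // ¬ Q b} // τ'^[d] y = y} := by
    intro d hd hdN
    rw [hcardσ' d hd, hcardτ' d hd, hcount' d hd hdN]
  have hkα' : Fintype.card {a : α // ¬ P a} = k - m := by
    rw [Fintype.card_subtype]
    have hsum := Finset.card_filter_add_card_filter_not
      (s := (Finset.univ : Finset α)) (p := P)
    have hcu : (Finset.univ : Finset α).card = k := by rw [Finset.card_univ, hk]
    have hO : (Finset.filter P Finset.univ).card = m := hOcardσ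
    omega
  have hkpos : 0 < k := by
    rw [← hk]
    exact Fintype.card_pos_iff.mpr ⟨x₀⟩
  have hlt : k - m < k := by omega
  obtain ⟨e', hconj'⟩ := IH (k - m) hlt σ' τ' N hN hσ'N hτ'N hcount'' hkα'
  -- orbit bijection
  have hwbij : Function.Bijective (fun x : {a : α // P a} =>
      (⟨τ^[Nat.find x.2] y₀, ⟨Nat.find x.2, (Nat.find_spec x.2).1, rfl⟩⟩ : {b : β // Q b})) := by
    constructor
    · intro x x' hxx
      have hval : τ^[Nat.find x.2] y₀ = τ^[Nat.find x'.2] y₀ := congrArg Subtype.val hxx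
      have hidx := huniqτ _ _ (Nat.find_spec x.2).1 (Nat.find_spec x'.2).1 hval
      apply Subtype.ext
      rw [← (Nat.find_spec x.2).2, ← (Nat.find_spec x'.2).2, hidx]
    · rintro ⟨y, hy⟩
      obtain ⟨i, him, rfl⟩ := hy
      refine ⟨⟨σ^[i] x₀, ⟨i, him, rfl⟩⟩, ?_⟩
      apply Subtype.ext
      have hfi := huniqσ _ i (Nat.find_spec (⟨i, him, rfl⟩ : P (σ^[i] x₀))).1 him
        (Nat.find_spec (⟨i, him, rfl⟩ : P (σ^[i] x₀))).2
      show τ^[Nat.find _] y₀ = τ^[i] y₀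
      rw [hfi]
  set w : {a : α // P a} ≃ {b : β // Q b} := Equiv.ofBijective _ hwbij with hwdef
  set e : α ≃ β :=
    (Equiv.sumCompl P).symm.trans ((Equiv.sumCongr w e').trans (Equiv.sumCompl Q)) with hedef
  have heP : ∀ (x : α) (hx : P x), e x = τ^[Nat.find hx] y₀ := by
    intro x hx
    rw [hedef]
    simp only [Equiv.trans_apply]
    rw [Equiv.sumCompl_symm_apply_of_pos hx]
    simp only [Equiv.sumCongr_apply, Sum.map_inl, Equiv.sumCompl_apply_inl]
    rfl
  have heN : ∀ (x : α) (hx : ¬ P x), e x = (e' ⟨x, hx⟩).1 := by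
    intro x hx
    rw [hedef]
    simp only [Equiv.trans_apply]
    rw [Equiv.sumCompl_symm_apply_of_neg hx]
    simp only [Equiv.sumCongr_apply, Sum.map_inr, Equiv.sumCompl_apply_inr]
  refine ⟨e, ?_⟩
  intro x
  by_cases hx : P x
  · have hσx : P (σ x) := (hPiff x).mp hx
    rw [heP x hx, heP (σ x) hσx]
    have hi : Nat.find hx < m := (Nat.find_spec hx).1
    have hxi : σ^[Nat.find hx] x₀ = x := (Nat.find_spec hx).2
    have hi' : Nat.find hσx < m := (Nat.find_spec hσx).1
    have hxi' : σ^[Nat.find hσx] x₀ = σ x := (Nat.find_spec hσx).2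
    rw [← Function.iterate_succ_apply' τ (Nat.find hx) y₀]
    simp only [Nat.succ_eq_add_one]
    by_cases hsucc : Nat.find hx + 1 < m
    · have h1 : σ^[Nat.find hx + 1] x₀ = σ x := by
        rw [Function.iterate_succ_apply', hxi]
      have hidx : Nat.find hσx = Nat.find hx + 1 :=
        huniqσ _ _ hi' hsucc (hxi'.trans h1.symm)
      rw [hidx]
    · have him : Nat.find hx + 1 = m := by omega
      have hstep : σ x = x₀ := by
        rw [← hxi, ← Function.iterate_succ_apply' σ (Nat.find hx) x₀]
        simp only [Nat.succ_eq_add_one]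
        rw [him, hcycσ]
      have hx0' : σ^[Nat.find hσx] x₀ = σ^[0] x₀ := by
        rw [hxi', hstep]
        simp
      have hidx : Nat.find hσx = 0 := huniqσ _ 0 hi' hm0 hx0'
      rw [hidx, him, hcycτ]
      simp
  · have hσx : ¬ P (σ x) := hclσ x hx
    rw [heN x hx, heN (σ x) hσx]
    have hmk : (⟨σ x, hσx⟩ : {a : α // ¬ P a}) = σ' ⟨x, hx⟩ := rfl
    rw [hmk, hconj' ⟨x, hx⟩]



lemma frob_iterate {R : Type*} [CommMonoid R] (p d : ℕ) (y : R) :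
    (fun z : R => z ^ p)^[d] y = y ^ (p ^ d) := by
  induction d generalizing y with
  | zero => simp
  | succ d ih =>
    rw [Function.iterate_succ_apply', ih, ← pow_mul, ← pow_succ]

lemma galois_fix_count (p n d : ℕ) [Fact p.Prime] (hn : 0 < n) (hd : 0 < d) (hdn : d ∣ n) :
    Nat.card {y : GaloisField p n // y ^ (p ^ d) = y} = p ^ d := by
  classical
  set F := GaloisField p n
  letI : Fintype F := Fintype.ofFinite F
  have hp2 : 1 < p := (Fact.out : p.Prime).one_lt
  have hcard : Fintype.card F = p ^ n := by
    rw [← Nat.card_eq_fintype_card]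
    exact GaloisField.card p n hn.ne'
  set g : F[X] := X ^ (p ^ d) - X with hgdef
  set f : F[X] := X ^ (p ^ n) - X with hfdef
  have hg_ne : g ≠ 0 := FiniteField.X_pow_card_pow_sub_X_ne_zero F hd.ne' hp2
  have hf_ne : f ≠ 0 := FiniteField.X_pow_card_pow_sub_X_ne_zero F hn.ne' hp2
  -- g divides f
  have hdvd1 : p ^ d - 1 ∣ p ^ n - 1 := by
    obtain ⟨c, rfl⟩ := hdn
    simpa [← pow_mul] using Nat.sub_dvd_pow_sub_pow (p ^ d) 1 c
  obtain ⟨t, ht⟩ := hdvd1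
  have h2 : (X ^ (p ^ d - 1) - 1 : F[X]) ∣ X ^ (p ^ n - 1) - 1 := by
    have h := sub_dvd_pow_sub_pow (X ^ (p ^ d - 1) : F[X]) 1 t
    rw [← pow_mul, ← ht, one_pow] at h
    exact h
  have hxg : g = X * (X ^ (p ^ d - 1) - 1) := by
    rw [hgdef, mul_sub, mul_one, ← pow_succ']
    congr 2
    have : 0 < p ^ d := pow_pos (by omega) d
    omega
  have hxf : f = X * (X ^ (p ^ n - 1) - 1) := by
    rw [hfdef, mul_sub, mul_one, ← pow_succ']
    congr 2
    have : 0 < p ^ n := pow_pos (by omega) n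
    omega
  have hgf : g ∣ f := by
    rw [hxg, hxf]
    exact mul_dvd_mul_left X h2
  -- f splits with all of F as roots
  have hroots_f : f.roots = Finset.univ.val := by
    have := FiniteField.roots_X_pow_card_sub_X F
    rwa [hcard] at this
  have hsplits_f : f.Splits := by
    rw [splits_iff_card_roots, hroots_f]
    rw [FiniteField.X_pow_card_pow_sub_X_natDegree_eq F hn.ne' hp2]
    rw [← Finset.card_def, Finset.card_univ, hcard]
  have hsplits_g : g.Splits :=
    hsplits_f.of_dvd hf_ne hgf
  have hroots_g_card : g.roots.card = p ^ d := by
    rw [splits_iff_card_roots.mp hsplits_g]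
    exact FiniteField.X_pow_card_pow_sub_X_natDegree_eq F hd.ne' hp2
  have hsep : g.Separable := galois_poly_separable p (p ^ d) (dvd_pow_self p hd.ne')
  have hnodup : g.roots.Nodup := Polynomial.nodup_roots hsep
  -- set identification
  have hset : {y : F | y ^ (p ^ d) = y} = ↑g.roots.toFinset := by
    ext y
    simp only [Set.mem_setOf_eq, Finset.coe_sort_coe, Multiset.mem_toFinset, Finset.mem_coe]
    rw [Polynomial.mem_roots hg_ne, Polynomial.IsRoot, hgdef]
    simp [sub_eq_zero]
  have : Nat.card {y : F // y ^ (p ^ d) = y} = Set.ncard {y : F | y ^ (p ^ d) = y} :=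
    Nat.card_coe_set_eq _
  rw [this, hset, Set.ncard_coe_finset, Multiset.toFinset_card_of_nodup hnodup, hroots_g_card]

lemma galois_pow_card (p n : ℕ) [Fact p.Prime] (hn : 0 < n) (y : GaloisField p n) :
    y ^ (p ^ n) = y := by
  letI : Fintype (GaloisField p n) := Fintype.ofFinite _
  have hcard : Fintype.card (GaloisField p n) = p ^ n := by
    rw [← Nat.card_eq_fintype_card]
    exact GaloisField.card p n hn.ne'
  rw [← hcard]
  exact FiniteField.pow_card y


lemma tentFix_finset (p m : ℕ) (hp : 2 ≤ p) (hm : 1 ≤ m) :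
    ∃ s : Finset ℝ, ↑s = {x : ℝ | x ∈ Set.Icc (0:ℝ) 1 ∧ (gp p)^[m] x = x} ∧ s.card = p ^ m := by
  have hq : 2 ≤ p ^ m := Nat.one_lt_pow (by omega) hp
  refine ⟨(Finset.range (p ^ m)).image (phi (p ^ m)), ?_, phi_card (p ^ m) hq⟩
  rw [tentFix_eq_cos_set p m hm, cos_set_eq (p ^ m) hq]

lemma tentFix_ncard (p m : ℕ) (hp : 2 ≤ p) (hm : 1 ≤ m) :
    Nat.card {x : ℝ // x ∈ Set.Icc (0:ℝ) 1 ∧ (gp p)^[m] x = x} = p ^ m := by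
  obtain ⟨s, hs, hcard⟩ := tentFix_finset p m hp hm
  have : Nat.card {x : ℝ // x ∈ Set.Icc (0:ℝ) 1 ∧ (gp p)^[m] x = x}
      = Set.ncard {x : ℝ | x ∈ Set.Icc (0:ℝ) 1 ∧ (gp p)^[m] x = x} :=
    Nat.card_coe_set_eq _
  rw [this, ← hs, Set.ncard_coe_finset, hcard]

lemma tentFix_finite (p m : ℕ) (hp : 2 ≤ p) (hm : 1 ≤ m) :
    Set.Finite {x : ℝ | x ∈ Set.Icc (0:ℝ) 1 ∧ (gp p)^[m] x = x} := by
  obtain ⟨s, hs, -⟩ := tentFix_finset p m hp hm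
  rw [← hs]
  exact s.finite_toSet

lemma iterate_val_comm {α : Type*} {P : α → Prop} (σ : {a // P a} → {a // P a}) (f : α → α)
    (hval : ∀ x, (σ x).1 = f x.1) (d : ℕ) (x : {a // P a}) : (σ^[d] x).1 = f^[d] x.1 := by
  induction d generalizing x with
  | zero => rfl
  | succ d ih =>
    rw [Function.iterate_succ_apply, Function.iterate_succ_apply, ih, hval]

/-- If `f : [u,v] → [u,v]` and `h : [0,1] → [u,v]` is a continuous bijection with
`f ∘ h = h ∘ g_p` on `[0,1]`, then there is a bijection `B_f` from the fixed points of
`f^n` to `F_{p^n}` with `(B_f(y))^p = B_f(f(y))` for every fixed point `y` of `f^n`. -/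
theorem exists_bijection_of_conjugate (p n : ℕ) [Fact p.Prime] (hn : 1 ≤ n)
    (u v : ℝ) (huv : u < v) (f h : ℝ → ℝ)
    (hf : Set.MapsTo f (Set.Icc u v) (Set.Icc u v))
    (hcont : ContinuousOn h (Set.Icc 0 1))
    (hbij : Set.BijOn h (Set.Icc 0 1) (Set.Icc u v))
    (hcomm : ∀ x ∈ Set.Icc (0 : ℝ) 1, f (h x) = h (gp p x)) :
    ∃ B : ℝ → GaloisField p n,
      Set.BijOn B {y ∈ Set.Icc u v | f^[n] y = y} Set.univ ∧
      ∀ y ∈ {y ∈ Set.Icc u v | f^[n] y = y}, B y ^ p = B (f y) := by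
  classical
  have hp2 : 2 ≤ p := (Fact.out : p.Prime).two_le
  have hn0 : 0 < n := hn
  set G : Set ℝ := {x : ℝ | x ∈ Set.Icc (0:ℝ) 1 ∧ (gp p)^[n] x = x} with hGdef
  have hGfin : G.Finite := tentFix_finite p n hp2 hn
  letI : Fintype ↥G := hGfin.fintype
  letI : Fintype (GaloisField p n) := Fintype.ofFinite _
  have hGmaps : ∀ x : ℝ, x ∈ G → gp p x ∈ G := by
    intro x hx
    refine ⟨gp_mem_Icc p x, ?_⟩
    have h1 : (gp p)^[n] (gp p x) = gp p ((gp p)^[n] x) := by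
      rw [← Function.iterate_succ_apply, Function.iterate_succ_apply']
    rw [h1, hx.2]
  set σ : ↥G → ↥G := fun x => ⟨gp p x.1, hGmaps x.1 x.2⟩ with hσdef
  have hσval : ∀ (d : ℕ) (x : ↥G), (σ^[d] x).1 = (gp p)^[d] x.1 :=
    fun d x => iterate_val_comm σ (gp p) (fun _ => rfl) d x
  have hσN : σ^[n] = id := by
    funext x
    apply Subtype.ext
    rw [hσval n x]
    exact x.2.2
  set τ : GaloisField p n → GaloisField p n := fun y => y ^ p with hτdef
  have hτval : ∀ (d : ℕ) (y : GaloisField p n), τ^[d] y = y ^ (p ^ d) :=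
    fun d y => frob_iterate p d y
  have hτN : τ^[n] = id := by
    funext y
    rw [hτval n y]
    exact galois_pow_card p n hn0 y
  have hcount : ∀ d, 0 < d → d ∣ n →
      Nat.card {x : ↥G // σ^[d] x = x} = Nat.card {y : GaloisField p n // τ^[d] y = y} := by
    intro d hd hdn
    have e1 : {x : ↥G // σ^[d] x = x} ≃ {x : ↥G // (gp p)^[d] x.1 = x.1} :=
      Equiv.subtypeEquivRight (fun x => by rw [Subtype.ext_iff, hσval d x])
    have e2 : {x : ↥G // (gp p)^[d] x.1 = x.1}
        ≃ {a : ℝ // (a ∈ G) ∧ (gp p)^[d] a = a} :=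
      Equiv.subtypeSubtypeEquivSubtypeInter (fun a : ℝ => a ∈ G) (fun a : ℝ => (gp p)^[d] a = a)
    have e3 : {a : ℝ // (a ∈ G) ∧ (gp p)^[d] a = a}
        ≃ {a : ℝ // a ∈ Set.Icc (0:ℝ) 1 ∧ (gp p)^[d] a = a} := by
      apply Equiv.subtypeEquivRight
      intro a
      constructor
      · rintro ⟨⟨h01, -⟩, hfix⟩; exact ⟨h01, hfix⟩
      · rintro ⟨h01, hfix⟩
        refine ⟨⟨h01, ?_⟩, hfix⟩
        obtain ⟨c, rfl⟩ := hdn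
        exact (show Function.IsPeriodicPt (gp p) d a from hfix).mul_const c
    have e4 : {y : GaloisField p n // τ^[d] y = y} ≃ {y : GaloisField p n // y ^ (p ^ d) = y} :=
      Equiv.subtypeEquivRight (fun y => by rw [hτval d y])
    rw [Nat.card_congr ((e1.trans e2).trans e3), Nat.card_congr e4,
      tentFix_ncard p d hp2 hd, galois_fix_count p n d hn0 hd hdn]
  obtain ⟨e, hconj⟩ := conj_of_fix_count (Fintype.card ↥G) σ τ n hn0 hσN hτN hcount rfl
  have hiter : ∀ (k : ℕ) (x : ℝ), x ∈ Set.Icc (0:ℝ) 1 → f^[k] (h x) = h ((gp p)^[k] x) := by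
    intro k
    induction k with
    | zero => intro x _; rfl
    | succ k ih =>
      intro x hx
      rw [Function.iterate_succ_apply, hcomm x hx, ih (gp p x) (gp_mem_Icc p x),
        ← Function.iterate_succ_apply]
  set Φ : Set ℝ := {y ∈ Set.Icc u v | f^[n] y = y} with hΦdef
  have hwmem : ∀ x : ↥G, h x.1 ∈ Φ := by
    intro x
    refine ⟨hbij.mapsTo x.2.1, ?_⟩
    rw [hiter n x.1 x.2.1, x.2.2]
  set w : ↥G → ↥Φ := fun x => ⟨h x.1, hwmem x⟩ with hwdef
  have hwbij : Function.Bijective w := by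
    constructor
    · intro x x' hxx
      apply Subtype.ext
      exact hbij.injOn x.2.1 x'.2.1 (congrArg Subtype.val hxx)
    · rintro ⟨y, hy⟩
      obtain ⟨x, hx01, hhx⟩ := hbij.surjOn hy.1
      have hfix : (gp p)^[n] x = x := by
        apply hbij.injOn (gp_iterate_mem_Icc p n hn x) hx01
        rw [← hiter n x hx01, hhx]
        exact hy.2
      exact ⟨⟨x, hx01, hfix⟩, Subtype.ext hhx⟩
  set E : ↥G ≃ ↥Φ := Equiv.ofBijective w hwbij with hEdef
  refine ⟨fun y => if hy : y ∈ Φ then e (E.symm ⟨y, hy⟩) else 0, ?_, ?_⟩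
  · refine ⟨fun y _ => Set.mem_univ _, ?_, ?_⟩
    · intro y1 hy1 y2 hy2 hB
      simp only [dif_pos hy1, dif_pos hy2] at hB
      have h1 := E.symm.injective (e.injective hB)
      exact congrArg Subtype.val h1
    · intro z _
      refine ⟨(E (e.symm z)).1, (E (e.symm z)).2, ?_⟩
      simp only [dif_pos (E (e.symm z)).2]
      have h1 : (⟨(E (e.symm z)).1, (E (e.symm z)).2⟩ : ↥Φ) = E (e.symm z) := Subtype.ext rfl
      rw [h1, Equiv.symm_apply_apply, Equiv.apply_symm_apply]
  · intro y hy
    have hfy : f y ∈ Φ := by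
      refine ⟨hf hy.1, ?_⟩
      rw [← Function.iterate_succ_apply, Function.iterate_succ_apply', hy.2]
    simp only [dif_pos hy, dif_pos hfy]
    set x : ↥G := E.symm ⟨y, hy⟩ with hxdef
    have hyx : y = h x.1 := by
      have h1 : E x = ⟨y, hy⟩ := Equiv.apply_symm_apply E ⟨y, hy⟩
      exact (congrArg Subtype.val h1).symm
    have hfyval : (⟨f y, hfy⟩ : ↥Φ) = E (σ x) := by
      apply Subtype.ext
      show f y = h (gp p x.1)
      rw [hyx, hcomm x.1 x.2.1]
    rw [hfyval, Equiv.symm_apply_apply, hconj x]
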